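/- Let a, b ∈ ℝ with 1 + a + b ≠ 0. If every root s of (1+a+b)s² + 2(1−b)s + (b−a+1) = 0 satisfies Re(s) < 0, then both roots of z² + az + b = 0 have modulus < 1. -/

import Mathlib

theorem stmt_6 (a b : ℝ) (hne : 1 + a + b ≠ 0)
    (hroots : ∀ s : ℂ,
      ((1 : ℂ) + a + b) * s ^ 2 + 2 * (1 - (b : ℂ)) * s + ((b : ℂ) - a + 1) = 0 → s.re < 0)
    (z : ℂ) (hz : z ^ 2 + (a : ℂ) * z + (b : ℂ) = 0) :
    ‖z‖ < 1 := by
  have hz1 : z ≠ 1 := by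
    intro h
    apply hne
    have : ((1 : ℂ) + a + b) = 0 := by rw [h] at hz; linear_combination hz
    exact_mod_cast (by exact_mod_cast this : ((1 + a + b : ℝ) : ℂ) = 0)
  have hzd : z - 1 ≠ 0 := sub_ne_zero.mpr hz1
  set t : ℂ := (z + 1) / (z - 1) with ht
  have heq : ((1 : ℂ) + a + b) * t ^ 2 + 2 * (1 - (b : ℂ)) * t + ((b : ℂ) - a + 1) = 0 := by
    rw [ht]; field_simp
    linear_combination (4 : ℂ) * hz
  have hre := hroots t heq
  have hden : 0 < Complex.normSq (z - 1) := by
    rwa [Complex.normSq_pos]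
  have htre : t.re = (Complex.normSq z - 1) / Complex.normSq (z - 1) := by
    rw [ht, Complex.div_re]
    simp [Complex.normSq_apply]
    ring
  rw [htre] at hre
  have hns : Complex.normSq z < 1 := by
    have := (div_neg_iff.mp hre)
    rcases this with ⟨h1, _⟩ | ⟨_, h2⟩
    · linarith
    · linarith
  have : ‖z‖ ^ 2 < 1 ^ 2 := by
    rw [Complex.sq_norm]; simpa using hns
  exact lt_of_pow_lt_pow_left₀ 2 (by norm_num) this
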